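/- Let -A generate a bounded analytic semigroup on H, β < 1, f ∈ L²((0,∞), t^β dt; H), and let v(t) = ∫₀^t e^{-(t-s)A} f(s) ds. Then v ∈ C⁰([0,∞); H), v(0) = 0, and v is a weak solution of u̇ + Au = f on (0,∞): for all φ ∈ C¹_c((0,∞); H) ∩ C⁰_c((0,∞); D(A*)), ∫₀^∞ (v(s), -φ̇(s) + A*φ(s)) ds = ∫₀^∞ (f(s), φ(s)) ds. -/

import Mathlib

open MeasureTheory Set Filter Topology
open scoped ComplexInnerProductSpace

/-- Joint continuity of `(t, x) ↦ T (max t 0) x` for a locally bounded semigroup with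
continuous orbits. -/
lemma stmt11_aux_cont {H : Type*} [NormedAddCommGroup H] [InnerProductSpace ℂ H]
    (T : ℝ → H →L[ℂ] H) (M : ℝ) (hM : ∀ t : ℝ, 0 ≤ t → ‖T t‖ ≤ M)
    (hTcont : ∀ x : H, ContinuousOn (fun t => T t x) (Ici 0)) :
    Continuous (fun q : ℝ × H => T (max q.1 0) q.2) := by
  have horb : ∀ x : H, Continuous fun t : ℝ => T (max t 0) x := by
    intro x
    exact (hTcont x).comp_continuous (continuous_id.max continuous_const)
      (fun t => mem_Ici.2 (le_max_right _ _))
  rw [continuous_iff_continuousAt]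
  rintro ⟨r₀, y₀⟩
  have h1 : Tendsto (fun q : ℝ × H => T (max q.1 0) (q.2 - y₀)) (𝓝 (r₀, y₀)) (𝓝 0) := by
    apply squeeze_zero_norm (a := fun q : ℝ × H => M * ‖q.2 - y₀‖)
    · intro q
      calc ‖T (max q.1 0) (q.2 - y₀)‖ ≤ ‖T (max q.1 0)‖ * ‖q.2 - y₀‖ :=
            (T (max q.1 0)).le_opNorm _
        _ ≤ M * ‖q.2 - y₀‖ :=
            mul_le_mul_of_nonneg_right (hM _ (le_max_right _ _)) (norm_nonneg _)
    · have : Tendsto (fun q : ℝ × H => M * ‖q.2 - y₀‖) (𝓝 (r₀, y₀)) (𝓝 (M * ‖y₀ - y₀‖)) := by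
        exact (continuous_const.mul ((continuous_snd.sub continuous_const).norm)).tendsto _
      simpa using this
  have h2 : Tendsto (fun q : ℝ × H => T (max q.1 0) y₀) (𝓝 (r₀, y₀))
      (𝓝 (T (max r₀ 0) y₀)) := by
    exact ((horb y₀).comp continuous_fst).tendsto _
  have h3 := h1.add h2
  rw [zero_add] at h3
  refine h3.congr (fun q => ?_)
  simp [map_sub]

/-- Local integrability of `f` near `0` from the weighted `L²` bound. -/
lemma stmt11_aux_int {H : Type*} [NormedAddCommGroup H]
    (β : ℝ) (hβ : β < 1) (f : ℝ → H)
    (hf : AEStronglyMeasurable f ((volume : Measure ℝ).restrict (Ioi 0)))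
    (hf2 : IntegrableOn (fun s => s ^ β * ‖f s‖ ^ 2) (Ioi 0)) (K : ℝ) :
    IntegrableOn f (Ioo 0 K) := by
  by_cases hK : 0 < K
  · have hb1 : IntegrableOn (fun s : ℝ => s ^ (-β)) (Ioo 0 K) :=
      (intervalIntegral.integrableOn_Ioo_rpow_iff hK).2 (by linarith)
    have hb2 : IntegrableOn (fun s => s ^ β * ‖f s‖ ^ 2) (Ioo 0 K) :=
      hf2.mono_set Ioo_subset_Ioi_self
    have hbound : Integrable (fun s : ℝ => (s ^ (-β) + s ^ β * ‖f s‖ ^ 2) / 2)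
        ((volume : Measure ℝ).restrict (Ioo 0 K)) := (hb1.add hb2).div_const 2
    refine hbound.mono' (hf.mono_measure (Measure.restrict_mono Ioo_subset_Ioi_self le_rfl)) ?_
    rw [ae_restrict_iff' measurableSet_Ioo]
    refine Eventually.of_forall (fun s hs => ?_)
    have hs0 : (0:ℝ) < s := hs.1
    set a : ℝ := s ^ (-β/2) with ha
    set b : ℝ := s ^ (β/2) * ‖f s‖ with hb
    have ha0 : 0 ≤ a := Real.rpow_nonneg hs0.le _
    have hb0 : 0 ≤ b := mul_nonneg (Real.rpow_nonneg hs0.le _) (norm_nonneg _)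
    have haa : a * a = s ^ (-β) := by
      rw [ha, ← Real.rpow_add hs0]; norm_num
    have hbb : b * b = s ^ β * ‖f s‖ ^ 2 := by
      have h2 : s ^ (β/2) * s ^ (β/2) = s ^ β := by
        rw [← Real.rpow_add hs0]; norm_num
      rw [hb]; nlinarith [h2]
    have hab : ‖f s‖ = a * b := by
      rw [ha, hb, ← mul_assoc, ← Real.rpow_add hs0]
      have h0 : -β/2 + β/2 = 0 := by ring
      rw [h0, Real.rpow_zero, one_mul]
    nlinarith [sq_nonneg (a - b), haa, hbb, hab]
  · rw [Ioo_eq_empty (by simpa using fun h : (0:ℝ) < K => hK h)]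
    exact integrableOn_empty

/-- let `-A` generate a bounded analytic semigroup `T` on `H`, `β < 1`,
`f ∈ L²((0,∞), t^β dt; H)`, and `v(t) = ∫₀^t e^{-(t-s)A} f(s) ds`. Then `v` is continuous
on `[0,∞)` with `v(0) = 0` and `v` is a weak solution of `u̇ + Au = f`: for every test
function `φ ∈ C¹_c((0,∞); H) ∩ C⁰_c((0,∞); D(A*))` (with `A*φ` given by `Aφ`),
`∫₀^∞ ⟪v(s), -φ'(s) + A*φ(s)⟫ ds = ∫₀^∞ ⟪f(s), φ(s)⟫ ds`. -/
theorem stmt11 {H : Type*} [NormedAddCommGroup H] [InnerProductSpace ℂ H] [CompleteSpace H]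
    (T : ℝ → H →L[ℂ] H) (M : ℝ)
    (hM : ∀ t : ℝ, 0 ≤ t → ‖T t‖ ≤ M)
    (hT0 : T 0 = ContinuousLinearMap.id ℂ H)
    (hTadd : ∀ s t : ℝ, 0 ≤ s → 0 ≤ t → T (s + t) = (T s).comp (T t))
    (hTcont : ∀ x : H, ContinuousOn (fun t => T t x) (Ici 0))
    (domA : Submodule ℂ H) (A : domA →ₗ[ℂ] H)
    (hgen : ∀ y : H, ∀ r : ℝ, 0 < r → ∃ hx : T r y ∈ domA,
      HasDerivAt (fun ρ : ℝ => T ρ y) (-(A ⟨T r y, hx⟩)) r)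
    (domAstar : Submodule ℂ H) (Astar : domAstar →ₗ[ℂ] H)
    (hdual : ∀ x : domA, ∀ z : domAstar, ⟪A x, (z : H)⟫ = ⟪(x : H), Astar z⟫)
    (β : ℝ) (hβ : β < 1) (f : ℝ → H)
    (hf : AEStronglyMeasurable f ((volume : Measure ℝ).restrict (Ioi 0)))
    (hf2 : IntegrableOn (fun s => s ^ β * ‖f s‖ ^ 2) (Ioi 0))
    (hmeas : ∀ t : ℝ, AEStronglyMeasurable (fun s => T (t - s) (f s))
      ((volume : Measure ℝ).restrict (Ioo 0 t)))
    (v : ℝ → H) (hv : ∀ t, v t = ∫ s in Ioo 0 t, T (t - s) (f s)) :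
    ContinuousOn v (Ici 0) ∧ v 0 = 0 ∧
      ∀ (φ φ' Aφ : ℝ → H),
        HasCompactSupport φ → Function.support φ ⊆ Ioi 0 →
        (∀ t, HasDerivAt φ (φ' t) t) → Continuous φ' → Continuous Aφ →
        (∀ t, ∃ hz : φ t ∈ domAstar, Astar ⟨φ t, hz⟩ = Aφ t) →
        ∫ s in Ioi (0:ℝ), ⟪v s, -(φ' s) + Aφ s⟫ = ∫ s in Ioi (0:ℝ), ⟪f s, φ s⟫ := by
  have Mnn : 0 ≤ M := le_trans (norm_nonneg (T 0)) (hM 0 le_rfl)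
  have hjc := stmt11_aux_cont T M hM hTcont
  have hfInt : ∀ K : ℝ, IntegrableOn f (Ioo 0 K) := stmt11_aux_int β hβ f hf hf2
  have huint : ∀ t : ℝ, Integrable (fun s => T (t - s) (f s))
      ((volume : Measure ℝ).restrict (Ioo 0 t)) := by
    intro t
    refine (((hfInt t).norm.const_mul M)).mono' (hmeas t) ?_
    rw [ae_restrict_iff' measurableSet_Ioo]
    refine Eventually.of_forall (fun s hs => ?_)
    calc ‖T (t - s) (f s)‖ ≤ ‖T (t - s)‖ * ‖f s‖ := (T (t - s)).le_opNorm _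
      _ ≤ M * ‖f s‖ := mul_le_mul_of_nonneg_right (hM _ (by linarith [hs.2])) (norm_nonneg _)
  have hv0 : v 0 = 0 := by
    rw [hv 0, Ioo_self, Measure.restrict_empty, integral_zero_measure]
  have hvcont : ContinuousOn v (Ici 0) := by
    intro t₀ ht₀
    have ht₀' : (0:ℝ) ≤ t₀ := ht₀
    set K := t₀ + 1 with hKdef
    have htK : t₀ < K := by simp [hKdef]
    set μK := (volume : Measure ℝ).restrict (Ioo 0 K) with hμK
    set F : ℝ → ℝ → H := fun t => (Ioo 0 t).indicator (fun s => T (max (t - s) 0) (f s))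
      with hF
    have hFm : ∀ t : ℝ, AEStronglyMeasurable (F t) μK := by
      intro t
      have h1 : AEStronglyMeasurable (fun s => T (max (t - s) 0) (f s))
          ((volume : Measure ℝ).restrict (Ioo 0 t)) := by
        refine (hmeas t).congr ?_
        rw [Filter.EventuallyEq, ae_restrict_iff' measurableSet_Ioo]
        refine Eventually.of_forall (fun s hs => ?_)
        rw [max_eq_left (by linarith [hs.2])]
      exact ((aestronglyMeasurable_indicator_iff measurableSet_Ioo).2 h1).restrict
    have hvF : ∀ t : ℝ, 0 ≤ t → t ≤ K → v t = ∫ s, F t s ∂μK := by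
      intro t h0 hK
      rw [hv t, hμK, hF, setIntegral_indicator measurableSet_Ioo,
        inter_eq_self_of_subset_right (Ioo_subset_Ioo_right hK)]
      refine setIntegral_congr_fun measurableSet_Ioo (fun s hs => ?_)
      rw [max_eq_left (by linarith [hs.2])]
    have hbound : Integrable (fun s => M * ‖f s‖) μK := (hfInt K).norm.const_mul M
    have hmain : Tendsto (fun t => ∫ s, F t s ∂μK) (𝓝[Ici 0] t₀)
        (𝓝 (∫ s, F t₀ s ∂μK)) := by
      refine tendsto_integral_filter_of_dominated_convergence (fun s => M * ‖f s‖)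
        (Eventually.of_forall hFm) (Eventually.of_forall (fun t => ?_)) hbound ?_
      · refine Eventually.of_forall (fun s => ?_)
        refine le_trans (norm_indicator_le_norm_self _ _) ?_
        calc ‖T (max (t - s) 0) (f s)‖ ≤ ‖T (max (t - s) 0)‖ * ‖f s‖ :=
              ContinuousLinearMap.le_opNorm _ _
          _ ≤ M * ‖f s‖ := mul_le_mul_of_nonneg_right (hM _ (le_max_right _ _)) (norm_nonneg _)
      · have hae1 : ∀ᵐ s ∂μK, s ∈ Ioo 0 K := ae_restrict_mem measurableSet_Ioo
        have hae2 : ∀ᵐ s ∂μK, s ≠ t₀ := by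
          refine ae_restrict_of_ae ?_
          rw [ae_iff]
          simp only [ne_eq, not_not, setOf_eq_eq_singleton]
          exact measure_singleton t₀
        filter_upwards [hae1, hae2] with s hs hsne
        rcases lt_or_gt_of_ne hsne with hlt | hgt
        · have hev : ∀ᶠ t in 𝓝[Ici 0] t₀, s ∈ Ioo 0 t := by
            have h := isOpen_Ioi.eventually_mem (show t₀ ∈ Ioi s from hlt)
            exact (h.filter_mono nhdsWithin_le_nhds).mono (fun t ht => show s ∈ Ioo 0 t from ⟨hs.1, ht⟩)
          have hco : Tendsto (fun t : ℝ => T (max (t - s) 0) (f s)) (𝓝[Ici 0] t₀)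
              (𝓝 (T (max (t₀ - s) 0) (f s))) := by
            have hc : Continuous fun t : ℝ => T (max (t - s) 0) (f s) :=
              hjc.comp ((continuous_id.sub continuous_const).prodMk continuous_const)
            exact (hc.tendsto t₀).mono_left nhdsWithin_le_nhds
          have he : F t₀ s = T (max (t₀ - s) 0) (f s) := by
            simp only [hF]
            exact indicator_of_mem (show s ∈ Ioo 0 t₀ from ⟨hs.1, hlt⟩) _
          rw [he]
          refine hco.congr' ?_
          filter_upwards [hev] with t ht
          simp only [hF]
          exact (indicator_of_mem ht (fun s => T (max (t - s) 0) (f s))).symm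
        · have hev : ∀ᶠ t in 𝓝[Ici 0] t₀, F t s = 0 := by
            have h := isOpen_Iio.eventually_mem (show t₀ ∈ Iio s from hgt)
            refine (h.filter_mono nhdsWithin_le_nhds).mono (fun t ht => ?_)
            exact indicator_of_notMem (fun hmem => absurd hmem.2 (not_lt.2 (le_of_lt ht))) _
          have h0 : F t₀ s = 0 :=
            indicator_of_notMem (fun hmem => lt_irrefl _ (lt_trans hgt hmem.2)) _
          rw [h0]
          exact Tendsto.congr' (by filter_upwards [hev] with t ht using ht.symm)
            tendsto_const_nhds
    have hev : ∀ᶠ t in 𝓝[Ici 0] t₀, v t = ∫ s, F t s ∂μK := by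
      have h1 := (isOpen_Iio.eventually_mem (show t₀ ∈ Iio K from htK)).filter_mono
        (nhdsWithin_le_nhds (s := Ici (0:ℝ)))
      have h2 : ∀ᶠ t in 𝓝[Ici 0] t₀, t ∈ Ici (0:ℝ) := eventually_mem_nhdsWithin
      filter_upwards [h1, h2] with t ha hb using hvF t hb (le_of_lt ha)
    show Tendsto v (𝓝[Ici 0] t₀) (𝓝 (v t₀))
    rw [hvF t₀ ht₀' htK.le]
    exact Tendsto.congr' (hev.mono fun t ht => ht.symm) hmain
  refine ⟨hvcont, hv0, ?_⟩
  intro φ φ' Aφ hφc hsupp hφd hφ'c hAφc hdom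
  have hφcont : Continuous φ := by
    rw [continuous_iff_continuousAt]; exact fun s => (hφd s).continuousAt
  obtain ⟨R, hR⟩ := hφc.isBounded.subset_ball 0
  set K := max R 1 with hKdef
  have hK0 : (0:ℝ) < K := lt_of_lt_of_le one_pos (le_max_right _ _)
  have hsupK : tsupport φ ⊆ Iio K := by
    intro x hx
    have h1 := hR hx
    rw [Real.ball_eq_Ioo] at h1
    have : x < R := by linarith [h1.2]
    exact lt_of_lt_of_le this (le_max_left _ _)
  have hφ'0 : ∀ s, s ∉ tsupport φ → φ' s = 0 := by
    intro s hs
    have hop : (tsupport φ)ᶜ ∈ 𝓝 s := (isClosed_tsupport φ).isOpen_compl.mem_nhds hs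
    have h0 : HasDerivAt φ 0 s := by
      refine (hasDerivAt_const s (0:H)).congr_of_eventuallyEq ?_
      filter_upwards [hop] with t ht using image_eq_zero_of_notMem_tsupport ht
    exact (hφd s).unique h0
  have hAφ0 : ∀ s, s ∉ tsupport φ → Aφ s = 0 := by
    intro s hs
    obtain ⟨hz, hze⟩ := hdom s
    have hφs : φ s = 0 := image_eq_zero_of_notMem_tsupport hs
    rw [← hze]
    have h0 : (⟨φ s, hz⟩ : domAstar) = 0 := Subtype.ext (by simpa using hφs)
    rw [h0, map_zero]
  set ψ : ℝ → H := fun s => -(φ' s) + Aφ s with hψdef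
  have hψc : Continuous ψ := (hφ'c.neg).add hAφc
  have hψ0 : ∀ s, s ∉ tsupport φ → ψ s = 0 := by
    intro s hs
    simp only [hψdef, hφ'0 s hs, hAφ0 s hs, neg_zero, add_zero]
  have hψsup : HasCompactSupport ψ := by
    have h1 : Function.support ψ ⊆ tsupport φ := by
      intro s hs
      by_contra hns
      exact hs (hψ0 s hns)
    exact IsCompact.of_isClosed_subset hφc isClosed_closure
      (closure_minimal h1 (isClosed_tsupport φ))
  obtain ⟨C, hC⟩ := hψsup.exists_bound_of_continuous hψc
  have hC0 : 0 ≤ C := le_trans (norm_nonneg (ψ 0)) (hC 0)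
  have hψK : ∀ s : ℝ, K ≤ s → ψ s = 0 := fun s hs =>
    hψ0 s (fun h => absurd (hsupK h) (not_lt.2 hs))
  have hφK : ∀ p : ℝ, K ≤ p → φ p = 0 := fun p hp =>
    image_eq_zero_of_notMem_tsupport (fun h => absurd (hsupK h) (not_lt.2 hp))
  -- the fundamental theorem of calculus step
  have key : ∀ p : ℝ, 0 < p → ∀ y : H,
      ∫ s in Ioi p, (⟪T (max (s - p) 0) y, ψ s⟫ : ℂ) = ⟪y, φ p⟫ := by
    intro p hp y
    set K' := max K (p + 1) with hK'def
    have hpK' : p < K' := lt_of_lt_of_le (by linarith) (le_max_right _ _)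
    have hKK' : K ≤ K' := le_max_left _ _
    set gm : ℝ → ℂ := fun s => ⟪T (max (s - p) 0) y, φ s⟫ with hgm
    set hm : ℝ → ℂ := fun s => ⟪T (max (s - p) 0) y, ψ s⟫ with hhm
    have hTxc : Continuous fun s : ℝ => T (max (s - p) 0) y :=
      hjc.comp ((continuous_id.sub continuous_const).prodMk continuous_const)
    have hderiv : ∀ s ∈ Ioo p K', HasDerivAt gm (-(hm s)) s := by
      intro s hs
      have hsp : 0 < s - p := by linarith [hs.1]
      obtain ⟨hx, hd⟩ := hgen y (s - p) hsp
      have hd2 : HasDerivAt (fun σ : ℝ => T (σ - p) y) (-(A ⟨T (s - p) y, hx⟩)) s := by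
        have h := hd.scomp s ((hasDerivAt_id s).sub_const p)
        simpa [Function.comp_def] using h
      have hd3 := HasDerivAt.inner ℂ hd2 (hφd s)
      have hev : gm =ᶠ[𝓝 s] fun σ => (⟪T (σ - p) y, φ σ⟫ : ℂ) := by
        filter_upwards [isOpen_Ioi.eventually_mem (show s ∈ Ioi p from hs.1)] with σ hσ
        have hσp : p < σ := hσ
        simp only [hgm]
        rw [max_eq_left (by linarith)]
      refine HasDerivAt.congr_of_eventuallyEq ?_ hev
      convert hd3 using 1
      · rfl
      obtain ⟨hz, hze⟩ := hdom s
      have hdd := hdual ⟨T (s - p) y, hx⟩ ⟨φ s, hz⟩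
      have hcoe1 : ((⟨φ s, hz⟩ : domAstar) : H) = φ s := rfl
      have hcoe2 : ((⟨T (s - p) y, hx⟩ : domA) : H) = T (s - p) y := rfl
      rw [hcoe1, hcoe2, hze] at hdd
      simp only [hhm, hψdef]
      rw [max_eq_left hsp.le, inner_add_right, inner_neg_right, inner_neg_left, hdd]
      ring
    have hgmK' : gm K' = 0 := by
      have h0 : φ K' = 0 := hφK K' hKK'
      simp [hgm, h0]
    have hgmp : gm p = (⟪y, φ p⟫ : ℂ) := by
      simp only [hgm, sub_self]
      rw [max_self, hT0]
      rfl
    have hcont : ContinuousOn gm (Icc p K') := (hTxc.inner hφcont).continuousOn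
    have hii : IntervalIntegrable (fun s => -(hm s)) volume p K' :=
      ((hTxc.inner hψc).neg).intervalIntegrable _ _
    have hftc := intervalIntegral.integral_eq_sub_of_hasDerivAt_of_le hpK'.le hcont
      (fun s hs => hderiv s hs) hii
    rw [intervalIntegral.integral_neg, hgmK', hgmp] at hftc
    have hint1 : ∫ s in p..K', hm s = (⟪y, φ p⟫ : ℂ) := by linear_combination -hftc
    have hEq : EqOn hm ((Ioc p K').indicator hm) (Ioi p) := by
      intro s hs
      by_cases hsK : s ≤ K'
      · rw [indicator_of_mem (show s ∈ Ioc p K' from ⟨hs, hsK⟩)]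
      · rw [indicator_of_notMem (fun hmem => hsK hmem.2)]
        have h0 : ψ s = 0 := hψK s (by push_neg at hsK; linarith)
        simp [hhm, h0]
    calc ∫ s in Ioi p, hm s
        = ∫ s in Ioi p, (Ioc p K').indicator hm s :=
          setIntegral_congr_fun measurableSet_Ioi hEq
      _ = ∫ s in Ioi p ∩ Ioc p K', hm s := setIntegral_indicator measurableSet_Ioc
      _ = ∫ s in Ioc p K', hm s := by
          rw [inter_eq_self_of_subset_right Ioc_subset_Ioi_self]
      _ = ∫ s in p..K', hm s := (intervalIntegral.integral_of_le hpK'.le).symm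
      _ = ⟪y, φ p⟫ := hint1
  -- Fubini setup
  haveI : Fact ((volume : Measure ℝ) (Ioo 0 K) < ⊤) := ⟨measure_Ioo_lt_top⟩
  have hfK : IntegrableOn f (Ioo 0 K) := hfInt K
  have hfmK : AEStronglyMeasurable f ((volume : Measure ℝ).restrict (Ioo 0 K)) :=
    hf.mono_measure (Measure.restrict_mono Ioo_subset_Ioi_self le_rfl)
  set E : Set (ℝ × ℝ) := {q : ℝ × ℝ | q.2 < q.1} with hE
  have hEm : MeasurableSet E := measurableSet_lt measurable_snd measurable_fst
  set G : ℝ × ℝ → ℂ :=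
    E.indicator (fun q => ⟪T (max (q.1 - q.2) 0) (f q.2), ψ q.1⟫) with hG
  set μ2 := ((volume : Measure ℝ).restrict (Ioo 0 K)).prod
    ((volume : Measure ℝ).restrict (Ioo 0 K)) with hμ2
  have hGm : AEStronglyMeasurable G μ2 := by
    have h1 : AEStronglyMeasurable (fun q : ℝ × ℝ => f q.2) μ2 :=
      hfmK.comp_quasiMeasurePreserving Measure.quasiMeasurePreserving_snd
    have hpair : AEStronglyMeasurable (fun q : ℝ × ℝ => (q.1 - q.2, f q.2)) μ2 :=
      ((continuous_fst.sub continuous_snd).aestronglyMeasurable).prodMk h1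
    have h2 : AEStronglyMeasurable
        (fun q : ℝ × ℝ => T (max (q.1 - q.2) 0) (f q.2)) μ2 :=
      hjc.comp_aestronglyMeasurable hpair
    have h3 : AEStronglyMeasurable (fun q : ℝ × ℝ => ψ q.1) μ2 :=
      (hψc.comp continuous_fst).aestronglyMeasurable
    exact (h2.inner h3).indicator hEm
  have hbint : Integrable (fun q : ℝ × ℝ => (M * C) * ‖f q.2‖) μ2 := by
    have h1 : Integrable (fun _ : ℝ => (M * C : ℝ))
        ((volume : Measure ℝ).restrict (Ioo 0 K)) := integrable_const _
    have h2 : Integrable (fun p : ℝ => ‖f p‖)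
        ((volume : Measure ℝ).restrict (Ioo 0 K)) := hfK.norm
    simpa using h1.mul_prod h2
  have hGint : Integrable G μ2 := by
    refine hbint.mono' hGm ?_
    refine Eventually.of_forall (fun q => ?_)
    refine le_trans (norm_indicator_le_norm_self _ _) ?_
    calc ‖(⟪T (max (q.1 - q.2) 0) (f q.2), ψ q.1⟫ : ℂ)‖
        ≤ ‖T (max (q.1 - q.2) 0) (f q.2)‖ * ‖ψ q.1‖ := norm_inner_le_norm _ _
      _ ≤ (M * ‖f q.2‖) * C := by
          refine mul_le_mul ?_ (hC _) (norm_nonneg _) (mul_nonneg Mnn (norm_nonneg _))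
          calc ‖T (max (q.1 - q.2) 0) (f q.2)‖
              ≤ ‖T (max (q.1 - q.2) 0)‖ * ‖f q.2‖ := ContinuousLinearMap.le_opNorm _ _
            _ ≤ M * ‖f q.2‖ :=
                mul_le_mul_of_nonneg_right (hM _ (le_max_right _ _)) (norm_nonneg _)
      _ = (M * C) * ‖f q.2‖ := by ring
  have hswap : (∫ s in Ioo 0 K, ∫ p in Ioo 0 K, G (s, p))
      = ∫ p in Ioo 0 K, ∫ s in Ioo 0 K, G (s, p) :=
    integral_integral_swap (f := fun s p => G (s, p)) (by exact hGint)
  -- step 1 : restrict the outer integral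
  have step1 : (∫ s in Ioi (0:ℝ), (⟪v s, ψ s⟫ : ℂ)) = ∫ s in Ioo 0 K, (⟪v s, ψ s⟫ : ℂ) := by
    have hEq : EqOn (fun s => (⟪v s, ψ s⟫ : ℂ))
        ((Ioo 0 K).indicator fun s => (⟪v s, ψ s⟫ : ℂ)) (Ioi 0) := by
      intro s hs
      by_cases hsK : s < K
      · rw [indicator_of_mem (show s ∈ Ioo 0 K from ⟨hs, hsK⟩)]
      · rw [indicator_of_notMem (fun hmem => hsK hmem.2)]
        simp [hψK s (not_lt.1 hsK)]
    rw [setIntegral_congr_fun measurableSet_Ioi hEq, setIntegral_indicator measurableSet_Ioo,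
      inter_eq_self_of_subset_right Ioo_subset_Ioi_self]
  -- step 2 : slice in p
  have step2 : ∀ s ∈ Ioo 0 K, (⟪v s, ψ s⟫ : ℂ) = ∫ p in Ioo 0 K, G (s, p) := by
    intro s hs
    have hslice : ∀ p : ℝ, G (s, p) = (Iio s).indicator
        (fun p => (⟪T (max (s - p) 0) (f p), ψ s⟫ : ℂ)) p := by
      intro p
      by_cases hps : p < s
      · rw [hG, indicator_of_mem (show (s, p) ∈ E from hps),
          indicator_of_mem (show p ∈ Iio s from hps)]
      · rw [hG, indicator_of_notMem (show (s, p) ∉ E from hps),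
          indicator_of_notMem (show p ∉ Iio s from hps)]
    have hIK : Ioo 0 K ∩ Iio s = Ioo 0 s := by
      ext x
      simp only [mem_inter_iff, mem_Ioo, mem_Iio]
      constructor
      · rintro ⟨⟨h1, _⟩, h3⟩; exact ⟨h1, h3⟩
      · rintro ⟨h1, h2⟩; exact ⟨⟨h1, lt_trans h2 hs.2⟩, h2⟩
    have h1 : (∫ p in Ioo 0 K, G (s, p)) = ∫ p in Ioo 0 s, (⟪T (s - p) (f p), ψ s⟫ : ℂ) := by
      calc (∫ p in Ioo 0 K, G (s, p))
          = ∫ p in Ioo 0 K, (Iio s).indicator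
              (fun p => (⟪T (max (s - p) 0) (f p), ψ s⟫ : ℂ)) p :=
            integral_congr_ae (Eventually.of_forall fun p => hslice p)
        _ = ∫ p in Ioo 0 K ∩ Iio s, (⟪T (max (s - p) 0) (f p), ψ s⟫ : ℂ) :=
            setIntegral_indicator measurableSet_Iio
        _ = ∫ p in Ioo 0 s, (⟪T (max (s - p) 0) (f p), ψ s⟫ : ℂ) := by rw [hIK]
        _ = ∫ p in Ioo 0 s, (⟪T (s - p) (f p), ψ s⟫ : ℂ) := by
            refine setIntegral_congr_fun measurableSet_Ioo (fun p hp => ?_)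
            rw [max_eq_left (by linarith [hp.2])]
    rw [h1, hv s]
    have hexch : (⟪∫ p in Ioo 0 s, T (s - p) (f p), ψ s⟫ : ℂ)
        = ∫ p in Ioo 0 s, (⟪T (s - p) (f p), ψ s⟫ : ℂ) := by
      rw [← inner_conj_symm (∫ p in Ioo 0 s, T (s - p) (f p)) (ψ s),
        ← integral_inner (huint s) (ψ s), ← integral_conj]
      exact integral_congr_ae (Eventually.of_forall fun p => inner_conj_symm _ _)
    exact hexch
  -- step 4 : slice in s and apply the FTC step
  have step4 : ∀ p ∈ Ioo 0 K, (∫ s in Ioo 0 K, G (s, p)) = (⟪f p, φ p⟫ : ℂ) := by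
    intro p hp
    have hslice : ∀ s : ℝ, G (s, p) = (Ioi p).indicator
        (fun s => (⟪T (max (s - p) 0) (f p), ψ s⟫ : ℂ)) s := by
      intro s
      by_cases hps : p < s
      · rw [hG, indicator_of_mem (show (s, p) ∈ E from hps),
          indicator_of_mem (show s ∈ Ioi p from hps)]
      · rw [hG, indicator_of_notMem (show (s, p) ∉ E from hps),
          indicator_of_notMem (show s ∉ Ioi p from hps)]
    have hIK : Ioo 0 K ∩ Ioi p = Ioo p K := by
      ext x
      simp only [mem_inter_iff, mem_Ioo, mem_Ioi]
      constructor
      · rintro ⟨⟨_, h2⟩, h3⟩; exact ⟨h3, h2⟩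
      · rintro ⟨h1, h2⟩; exact ⟨⟨lt_trans hp.1 h1, h2⟩, h1⟩
    have hext : (∫ s in Ioi p, (⟪T (max (s - p) 0) (f p), ψ s⟫ : ℂ))
        = ∫ s in Ioo p K, (⟪T (max (s - p) 0) (f p), ψ s⟫ : ℂ) := by
      have hEq : EqOn (fun s => (⟪T (max (s - p) 0) (f p), ψ s⟫ : ℂ))
          ((Ioo p K).indicator fun s => (⟪T (max (s - p) 0) (f p), ψ s⟫ : ℂ)) (Ioi p) := by
        intro s hs
        by_cases hsK : s < K
        · rw [indicator_of_mem (show s ∈ Ioo p K from ⟨hs, hsK⟩)]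
        · rw [indicator_of_notMem (fun hmem => hsK hmem.2)]
          simp [hψK s (not_lt.1 hsK)]
      rw [setIntegral_congr_fun measurableSet_Ioi hEq, setIntegral_indicator measurableSet_Ioo,
        inter_eq_self_of_subset_right Ioo_subset_Ioi_self]
    calc (∫ s in Ioo 0 K, G (s, p))
        = ∫ s in Ioo 0 K, (Ioi p).indicator
            (fun s => (⟪T (max (s - p) 0) (f p), ψ s⟫ : ℂ)) s :=
          integral_congr_ae (Eventually.of_forall fun s => hslice s)
      _ = ∫ s in Ioo 0 K ∩ Ioi p, (⟪T (max (s - p) 0) (f p), ψ s⟫ : ℂ) :=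
          setIntegral_indicator measurableSet_Ioi
      _ = ∫ s in Ioo p K, (⟪T (max (s - p) 0) (f p), ψ s⟫ : ℂ) := by rw [hIK]
      _ = ∫ s in Ioi p, (⟪T (max (s - p) 0) (f p), ψ s⟫ : ℂ) := hext.symm
      _ = ⟪f p, φ p⟫ := key p hp.1 (f p)
  -- step 5 : extend the final integral back to `Ioi 0`
  have step5 : (∫ p in Ioo 0 K, (⟪f p, φ p⟫ : ℂ)) = ∫ p in Ioi (0:ℝ), (⟪f p, φ p⟫ : ℂ) := by
    have hEq : EqOn (fun p => (⟪f p, φ p⟫ : ℂ))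
        ((Ioo 0 K).indicator fun p => (⟪f p, φ p⟫ : ℂ)) (Ioi 0) := by
      intro p hp
      by_cases hpK : p < K
      · rw [indicator_of_mem (show p ∈ Ioo 0 K from ⟨hp, hpK⟩)]
      · rw [indicator_of_notMem (fun hmem => hpK hmem.2)]
        simp [hφK p (not_lt.1 hpK)]
    rw [setIntegral_congr_fun measurableSet_Ioi hEq, setIntegral_indicator measurableSet_Ioo,
      inter_eq_self_of_subset_right Ioo_subset_Ioi_self]
  have main : (∫ s in Ioi (0:ℝ), (⟪v s, ψ s⟫ : ℂ)) = ∫ s in Ioi (0:ℝ), (⟪f s, φ s⟫ : ℂ) := by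
    calc (∫ s in Ioi (0:ℝ), (⟪v s, ψ s⟫ : ℂ))
        = ∫ s in Ioo 0 K, (⟪v s, ψ s⟫ : ℂ) := step1
      _ = ∫ s in Ioo 0 K, ∫ p in Ioo 0 K, G (s, p) :=
          setIntegral_congr_fun measurableSet_Ioo step2
      _ = ∫ p in Ioo 0 K, ∫ s in Ioo 0 K, G (s, p) := hswap
      _ = ∫ p in Ioo 0 K, (⟪f p, φ p⟫ : ℂ) :=
          setIntegral_congr_fun measurableSet_Ioo step4
      _ = ∫ p in Ioi (0:ℝ), (⟪f p, φ p⟫ : ℂ) := step5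
  simpa only [hψdef] using main
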